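/- Let P = {x ∈ ℝⁿ : Ax = b, Bx ≤ d} be bounded and let x be a vertex of P. (a) If z ∈ ℝⁿ with ‖z‖₁ = 1 satisfies x + εz ∈ P for some ε > 0, and α > 0 is such that the augmentation αz at x is maximal (x + αz ∈ P but x + (α+ε)z ∉ P for all ε > 0), then α ≥ ω₁. (b) If z* ∈ ℝⁿ with ‖z*‖₁ = 1 and α* > 0 satisfy x + α*z* ∈ P, then α* ≤ M₁. -/

import Mathlib

noncomputable section

variable {n mA mB : ℕ}

/-- The real matrix obtained from an integer matrix. -/
def rmat {m k : Type*} (M : Matrix m k ℤ) : Matrix m k ℝ := M.map (fun z => (z : ℝ))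

/-- The real vector obtained from an integer vector. -/
def rvec {m : Type*} (v : m → ℤ) : m → ℝ := fun i => (v i : ℝ)

/-- The feasible region `P = {x : Ax = b, Bx ≤ d}`. -/
def Pset (A : Matrix (Fin mA) (Fin n) ℤ) (B : Matrix (Fin mB) (Fin n) ℤ)
    (b : Fin mA → ℤ) (d : Fin mB → ℤ) : Set (Fin n → ℝ) :=
  {x | (rmat A).mulVec x = rvec b ∧ ∀ i, (rmat B).mulVec x i ≤ (d i : ℝ)}

/-- `g` is a circuit of the system `Ax = b, Bx ≤ d`:  `g` is a nonzero kernel element of `A`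
whose image `Bg` is support-minimal among `{By : y ∈ ker A, y ≠ 0}`. -/
def IsCircuit (A : Matrix (Fin mA) (Fin n) ℤ) (B : Matrix (Fin mB) (Fin n) ℤ)
    (g : Fin n → ℝ) : Prop :=
  g ≠ 0 ∧ (rmat A).mulVec g = 0 ∧
    ∀ y : Fin n → ℝ, y ≠ 0 → (rmat A).mulVec y = 0 →
      ¬ ({i | (rmat B).mulVec y i ≠ 0} ⊂ {i | (rmat B).mulVec g i ≠ 0})

/-- The set `C(A,B)` of circuits, normalized to have coprime integer components. -/
def CAB (A : Matrix (Fin mA) (Fin n) ℤ) (B : Matrix (Fin mB) (Fin n) ℤ) :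
    Set (Fin n → ℝ) :=
  {g | IsCircuit A B g ∧ ∃ gz : Fin n → ℤ, (∀ i, g i = (gz i : ℝ)) ∧
        Finset.univ.gcd (fun i => (gz i).natAbs) = 1}

/-- `cᵀx` for an integer objective `c` and a real point `x`. -/
def dotIC (c : Fin n → ℤ) (x : Fin n → ℝ) : ℝ := ∑ i, (c i : ℝ) * x i

/-- The 1-norm of a vector. -/
def norm1 (x : Fin n → ℝ) : ℝ := ∑ i, |x i|

/-- `α g` is a maximal augmentation at `x` (within `P`). -/
def IsMaxAug (P : Set (Fin n → ℝ)) (x g : Fin n → ℝ) (α : ℝ) : Prop :=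
  0 < α ∧ x + α • g ∈ P ∧ ∀ ε : ℝ, 0 < ε → x + (α + ε) • g ∉ P

/-- `δ`: the largest absolute value of the determinant of an `n × n` submatrix of the
stacked matrix `(A; B)`. -/
def deltaMax (A : Matrix (Fin mA) (Fin n) ℤ) (B : Matrix (Fin mB) (Fin n) ℤ) : ℝ :=
  sSup {r : ℝ | ∃ f : Fin n → (Fin mA ⊕ Fin mB), Function.Injective f ∧
        r = |((((Matrix.fromRows A B).submatrix f id).det : ℤ) : ℝ)|}

/-- An (exposed) face of `P`: the set of minimizers over `P` of some linear functional. -/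
def IsFace (P F : Set (Fin n → ℝ)) : Prop :=
  ∃ w : Fin n → ℝ, F = {x ∈ P | ∀ y ∈ P, ∑ i, w i * x i ≤ ∑ i, w i * y i}

/-- The (affine) dimension of a subset of `ℝⁿ`. -/
def dimS (S : Set (Fin n → ℝ)) : ℕ := Module.finrank ℝ (affineSpan ℝ S).direction

/-- A facet of `P`: a face of dimension `dim P − 1`. -/
def IsFacet (P F : Set (Fin n → ℝ)) : Prop := IsFace P F ∧ dimS F + 1 = dimS P

/-- `ω₁`: the minimum 1-norm distance from a vertex of `P` to a point on a facet of `P`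
not containing that vertex. -/
def omega1 (P : Set (Fin n → ℝ)) : ℝ :=
  sInf {r : ℝ | ∃ v ∈ Set.extremePoints ℝ P, ∃ F : Set (Fin n → ℝ),
        IsFacet P F ∧ v ∉ F ∧ ∃ f ∈ F, r = norm1 (v - f)}

/-- `M₁`: the maximum 1-norm distance between two vertices of `P`. -/
def M1 (P : Set (Fin n → ℝ)) : ℝ :=
  sSup {r : ℝ | ∃ v₁ ∈ Set.extremePoints ℝ P, ∃ v₂ ∈ Set.extremePoints ℝ P,
        r = norm1 (v₁ - v₂)}

lemma eps_min {ι : Type*} (s : Finset ι) (f : ι → ℝ) (hf : ∀ i ∈ s, 0 < f i) :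
    ∃ ε : ℝ, 0 < ε ∧ ∀ i ∈ s, ε ≤ f i := by
  classical
  induction s using Finset.induction_on with
  | empty => exact ⟨1, one_pos, by simp⟩
  | @insert a s ha ih =>
    obtain ⟨ε, hε, hall⟩ := ih fun i hi => hf i (Finset.mem_insert_of_mem hi)
    refine ⟨min ε (f a), lt_min hε (hf a (Finset.mem_insert_self a s)), ?_⟩
    intro i hi
    rcases Finset.mem_insert.1 hi with rfl | hi
    · exact min_le_right _ _
    · exact (min_le_left _ _).trans (hall i hi)

lemma eps_step {ι : Type*} (s : Finset ι) (g h : ι → ℝ)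
    (H : ∀ i ∈ s, g i ≤ 0 ∨ 0 < h i) (H2 : ∀ i ∈ s, 0 ≤ h i) :
    ∃ ε : ℝ, 0 < ε ∧ ∀ i ∈ s, ε * g i ≤ h i := by
  classical
  obtain ⟨ε, hε, hall⟩ := eps_min s (fun i => if 0 < h i then h i / (|g i| + 1) else 1)
    (fun i hi => by
      split_ifs with hh
      · positivity
      · exact one_pos)
  refine ⟨ε, hε, fun i hi => ?_⟩
  rcases H i hi with hg | hh
  · exact (mul_nonpos_of_nonneg_of_nonpos hε.le hg).trans (H2 i hi)
  · have h1 : ε ≤ h i / (|g i| + 1) := by simpa [if_pos hh] using hall i hi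
    have h2 : (0:ℝ) < |g i| + 1 := by positivity
    calc ε * g i ≤ ε * (|g i| + 1) := by nlinarith [le_abs_self (g i)]
      _ ≤ (h i / (|g i| + 1)) * (|g i| + 1) := mul_le_mul_of_nonneg_right h1 h2.le
      _ = h i := div_mul_cancel₀ _ h2.ne'

/-- A subset `K` of the inequality indices suffices to define `P`. -/
def Defin (A : Matrix (Fin mA) (Fin n) ℤ) (B : Matrix (Fin mB) (Fin n) ℤ)
    (b : Fin mA → ℤ) (d : Fin mB → ℤ) (K : Finset (Fin mB)) : Prop :=
  ∀ p : Fin n → ℝ, (rmat A).mulVec p = rvec b →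
    (∀ i ∈ K, (rmat B).mulVec p i ≤ (d i : ℝ)) → p ∈ Pset A B b d

lemma relint_point (A : Matrix (Fin mA) (Fin n) ℤ) (B : Matrix (Fin mB) (Fin n) ℤ)
    (b : Fin mA → ℤ) (d : Fin mB → ℤ) (x : Fin n → ℝ) (hxP : x ∈ Pset A B b d) :
    ∃ c ∈ Pset A B b d, ∀ i : Fin mB,
      (¬ ∀ p ∈ Pset A B b d, (rmat B).mulVec p i = (d i : ℝ)) →
      (rmat B).mulVec c i < (d i : ℝ) := by
  classical
  set P := Pset A B b d with hP
  set p' : Fin mB → (Fin n → ℝ) := fun i =>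
    if h : ∃ p ∈ P, (rmat B).mulVec p i < (d i : ℝ) then h.choose else x with hp'
  have hp'P : ∀ i, p' i ∈ P := by
    intro i
    by_cases h : ∃ p ∈ P, (rmat B).mulVec p i < (d i : ℝ)
    · simpa [hp', dif_pos h] using h.choose_spec.1
    · simpa [hp', dif_neg h] using hxP
  set c : Fin n → ℝ := ((mB : ℝ) + 1)⁻¹ • (x + ∑ k, p' k) with hc
  have hpos : (0:ℝ) < (mB : ℝ) + 1 := by positivity
  have hAc : (rmat A).mulVec c = rvec b := by
    have : (rmat A).mulVecLin c = ((mB : ℝ) + 1)⁻¹ • ((rmat A).mulVecLin x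
        + ∑ k, (rmat A).mulVecLin (p' k)) := by
      rw [hc, map_smul, map_add, map_sum]
    rw [← Matrix.mulVecLin_apply, this]
    simp only [Matrix.mulVecLin_apply, hxP.1]
    have : ∀ k, (rmat A).mulVec (p' k) = rvec b := fun k => (hp'P k).1
    simp only [this, Finset.sum_const, Finset.card_univ, Fintype.card_fin]
    funext i
    simp only [Pi.smul_apply, Pi.add_apply, nsmul_eq_mul, smul_eq_mul, Pi.mul_apply, Pi.natCast_apply]
    field_simp
    ring
  have hBc : ∀ i, (rmat B).mulVec c i = ((mB : ℝ) + 1)⁻¹ *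
      ((rmat B).mulVec x i + ∑ k, (rmat B).mulVec (p' k) i) := by
    intro i
    have : (rmat B).mulVecLin c = ((mB : ℝ) + 1)⁻¹ • ((rmat B).mulVecLin x
        + ∑ k, (rmat B).mulVecLin (p' k)) := by
      rw [hc, map_smul, map_add, map_sum]
    rw [← Matrix.mulVecLin_apply, this]
    simp [Matrix.mulVecLin_apply]
  refine ⟨c, ⟨hAc, ?_⟩, ?_⟩
  · intro i
    rw [hBc i]
    have h1 : (rmat B).mulVec x i + ∑ k, (rmat B).mulVec (p' k) i ≤
        ((mB : ℝ) + 1) * (d i : ℝ) := by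
      have hx' := hxP.2 i
      have hsum : ∑ k, (rmat B).mulVec (p' k) i ≤ ∑ _k : Fin mB, (d i : ℝ) :=
        Finset.sum_le_sum fun k _ => (hp'P k).2 i
      simp only [Finset.sum_const, Finset.card_univ, Fintype.card_fin, nsmul_eq_mul] at hsum
      nlinarith
    calc ((mB : ℝ) + 1)⁻¹ * ((rmat B).mulVec x i + ∑ k, (rmat B).mulVec (p' k) i)
        ≤ ((mB : ℝ) + 1)⁻¹ * (((mB : ℝ) + 1) * (d i : ℝ)) := by
          apply mul_le_mul_of_nonneg_left h1 (by positivity)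
      _ = (d i : ℝ) := by field_simp
  · intro i hi
    have hex : ∃ p ∈ P, (rmat B).mulVec p i < (d i : ℝ) := by
      push_neg at hi
      obtain ⟨p, hpP, hpne⟩ := hi
      exact ⟨p, hpP, lt_of_le_of_ne (hpP.2 i) hpne⟩
    have hstrict : (rmat B).mulVec (p' i) i < (d i : ℝ) := by
      simpa [hp', dif_pos hex] using hex.choose_spec.2
    rw [hBc i]
    have h1 : (rmat B).mulVec x i + ∑ k, (rmat B).mulVec (p' k) i <
        ((mB : ℝ) + 1) * (d i : ℝ) := by
      have hx' := hxP.2 i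
      have hsum : ∑ k, (rmat B).mulVec (p' k) i < ∑ _k : Fin mB, (d i : ℝ) := by
        apply Finset.sum_lt_sum (fun k _ => (hp'P k).2 i) ⟨i, Finset.mem_univ i, hstrict⟩
      simp only [Finset.sum_const, Finset.card_univ, Fintype.card_fin, nsmul_eq_mul] at hsum
      nlinarith
    calc ((mB : ℝ) + 1)⁻¹ * ((rmat B).mulVec x i + ∑ k, (rmat B).mulVec (p' k) i)
        < ((mB : ℝ) + 1)⁻¹ * (((mB : ℝ) + 1) * (d i : ℝ)) := by
          apply mul_lt_mul_of_pos_left h1 (by positivity)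
      _ = (d i : ℝ) := by field_simp

lemma face_of_tight (A : Matrix (Fin mA) (Fin n) ℤ) (B : Matrix (Fin mB) (Fin n) ℤ)
    (b : Fin mA → ℤ) (d : Fin mB → ℤ) (y : Fin n → ℝ) (j : Fin mB)
    (hyP : y ∈ Pset A B b d) (hty : (rmat B).mulVec y j = (d j : ℝ)) :
    IsFace (Pset A B b d) {p ∈ Pset A B b d | (rmat B).mulVec p j = (d j : ℝ)} := by
  refine ⟨fun k => -(rmat B j k), ?_⟩
  have key : ∀ p : Fin n → ℝ, ∑ i, (-(rmat B j i)) * p i = -((rmat B).mulVec p j) := by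
    intro p
    rw [Matrix.mulVec, dotProduct, ← Finset.sum_neg_distrib]
    exact Finset.sum_congr rfl fun i _ => by ring
  ext p
  simp only [Set.mem_setOf_eq, key]
  constructor
  · rintro ⟨hpP, hpt⟩
    exact ⟨hpP, fun q hq => by have := hq.2 j; rw [hpt]; linarith⟩
  · rintro ⟨hpP, hmin⟩
    refine ⟨hpP, le_antisymm (hpP.2 j) ?_⟩
    have := hmin y hyP
    rw [hty] at this
    linarith

/-- The hyperplane `{p | (Bp)_j = d_j}` as an affine subspace. -/
def hypAS (B : Matrix (Fin mB) (Fin n) ℤ) (d : Fin mB → ℤ) (j : Fin mB) :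
    AffineSubspace ℝ (Fin n → ℝ) where
  carrier := {p | (rmat B).mulVec p j = (d j : ℝ)}
  smul_vsub_vadd_mem' := by
    intro c p1 p2 p3 h1 h2 h3
    simp only [Set.mem_setOf_eq] at h1 h2 h3 ⊢
    have : c • (p1 -ᵥ p2) +ᵥ p3 = c • (p1 - p2) + p3 := rfl
    rw [this, Matrix.mulVec_add, Matrix.mulVec_smul, Matrix.mulVec_sub]
    simp [h1, h2, h3]


lemma mulVec_comb {m : ℕ} (M : Matrix (Fin m) (Fin n) ℝ) (p q : Fin n → ℝ) (t : ℝ) (i : Fin m) :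
    M.mulVec (p + t • q) i = M.mulVec p i + t * M.mulVec q i := by
  rw [Matrix.mulVec_add, Matrix.mulVec_smul]; simp

lemma mulVec_sub_apply {m : ℕ} (M : Matrix (Fin m) (Fin n) ℝ) (p q : Fin n → ℝ) (i : Fin m) :
    M.mulVec (p - q) i = M.mulVec p i - M.mulVec q i := by
  rw [Matrix.mulVec_sub]; simp

lemma finrank_le_inf_ker_add_one {V : Type*} [AddCommGroup V] [Module ℝ V]
    [FiniteDimensional ℝ V] (W : Submodule ℝ V) (f : V →ₗ[ℝ] ℝ) :
    Module.finrank ℝ W ≤ Module.finrank ℝ ↥(W ⊓ LinearMap.ker f) + 1 := by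
  set ψ := f.domRestrict W with hψdef
  have hrk := LinearMap.finrank_range_add_finrank_ker ψ
  have hkereq : LinearMap.ker ψ = Submodule.comap W.subtype (W ⊓ LinearMap.ker f) := by
    ext v
    simp only [LinearMap.mem_ker, hψdef, LinearMap.domRestrict_apply, Submodule.mem_comap,
      Submodule.coe_subtype, Submodule.mem_inf]
    exact ⟨fun h => ⟨v.2, h⟩, fun h => h.2⟩
  have hker : Module.finrank ℝ (LinearMap.ker ψ)
      = Module.finrank ℝ ↥(W ⊓ LinearMap.ker f) := by
    rw [hkereq]
    exact (Submodule.comapSubtypeEquivOfLe inf_le_left).finrank_eq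
  have hrange := Submodule.finrank_le (LinearMap.range ψ)
  rw [Module.finrank_self] at hrange
  omega

lemma facet_exists (A : Matrix (Fin mA) (Fin n) ℤ) (B : Matrix (Fin mB) (Fin n) ℤ)
    (b : Fin mA → ℤ) (d : Fin mB → ℤ) (x y : Fin n → ℝ)
    (hxP : x ∈ Pset A B b d) (hyP : y ∈ Pset A B b d) (i0 : Fin mB)
    (hty : (rmat B).mulVec y i0 = (d i0 : ℝ)) (hsx : (rmat B).mulVec x i0 < (d i0 : ℝ)) :
    ∃ F : Set (Fin n → ℝ), IsFacet (Pset A B b d) F ∧ y ∈ F ∧ x ∉ F := by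
  classical
  set P := Pset A B b d with hPdef
  -- a minimal defining subsystem
  have hdU : Defin A B b d Finset.univ := fun p h1 h2 => ⟨h1, fun i => h2 i (Finset.mem_univ i)⟩
  have hS : {k : ℕ | ∃ K : Finset (Fin mB), Defin A B b d K ∧ K.card = k}.Nonempty :=
    ⟨_, Finset.univ, hdU, rfl⟩
  obtain ⟨K, hK, hKcard⟩ := Nat.sInf_mem hS
  have hKmin : ∀ j ∈ K, ¬ Defin A B b d (K.erase j) := by
    intro j hj hcon
    have h1 : sInf {k : ℕ | ∃ K : Finset (Fin mB), Defin A B b d K ∧ K.card = k}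
        ≤ (K.erase j).card := Nat.sInf_le ⟨K.erase j, hcon, rfl⟩
    have h2 := Finset.card_erase_lt_of_mem hj
    omega
  by_cases hcase : ∃ j ∈ K, (rmat B).mulVec y j = (d j : ℝ) ∧ (rmat B).mulVec x j < (d j : ℝ)
  · -- the tight constraint j defines a facet
    obtain ⟨j, hjK, hjy, hjx⟩ := hcase
    set F : Set (Fin n → ℝ) := {p ∈ P | (rmat B).mulVec p j = (d j : ℝ)} with hFdef
    have hyF : y ∈ F := ⟨hyP, hjy⟩
    have hxF : x ∉ F := fun h => absurd h.2 hjx.ne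
    have hFace : IsFace P F := face_of_tight A B b d y j hyP hjy
    -- a relative interior point c of P
    obtain ⟨c, hcP, hcstrict⟩ := relint_point A B b d x hxP
    have hcj : (rmat B).mulVec c j < (d j : ℝ) :=
      hcstrict j (fun himp => absurd (himp x hxP) hjx.ne)
    -- a point violating only j
    have hnd := hKmin j hjK
    unfold Defin at hnd; push_neg at hnd
    obtain ⟨q, hqA, hqK, hqP⟩ := hnd
    have hqj : (d j : ℝ) < (rmat B).mulVec q j := by
      by_contra h
      push_neg at h
      refine hqP (hK q hqA fun i hi => ?_)
      by_cases hij : i = j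
      · subst hij; exact h
      · exact hqK i (Finset.mem_erase.2 ⟨hij, hi⟩)
    -- crossing point u
    set t : ℝ := ((d j : ℝ) - (rmat B).mulVec c j) / ((rmat B).mulVec q j - (rmat B).mulVec c j)
      with htdef
    have hden : (0:ℝ) < (rmat B).mulVec q j - (rmat B).mulVec c j := by linarith
    have ht0 : 0 < t := div_pos (by linarith) hden
    have ht1 : t < 1 := (div_lt_one hden).2 (by linarith)
    set u : Fin n → ℝ := c + t • (q - c) with hudef
    have hBu : ∀ i, (rmat B).mulVec u i
        = (rmat B).mulVec c i + t * ((rmat B).mulVec q i - (rmat B).mulVec c i) := by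
      intro i; rw [hudef, mulVec_comb, mulVec_sub_apply]
    have huj : (rmat B).mulVec u j = (d j : ℝ) := by
      rw [hBu, htdef]
      field_simp
      ring
    have huK : ∀ i ∈ K, (rmat B).mulVec u i ≤ (d i : ℝ) := by
      intro i hi
      by_cases hij : i = j
      · subst hij; exact huj.le
      · have h1 := hcP.2 i
        have h2 := hqK i (Finset.mem_erase.2 ⟨hij, hi⟩)
        rw [hBu]; nlinarith
    have huA : (rmat A).mulVec u = rvec b := by
      rw [hudef, Matrix.mulVec_add, Matrix.mulVec_smul, Matrix.mulVec_sub, hcP.1, hqA]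
      simp
    have huP : u ∈ P := hK u huA huK
    have hustrict : ∀ i ∈ K, i ≠ j →
        (¬ ∀ p ∈ P, (rmat B).mulVec p i = (d i : ℝ)) → (rmat B).mulVec u i < (d i : ℝ) := by
      intro i hi hij hni
      have h1 := hcstrict i hni
      have h2 := hqK i (Finset.mem_erase.2 ⟨hij, hi⟩)
      rw [hBu]; nlinarith
    -- submodules
    set φ : Fin mB → ((Fin n → ℝ) →ₗ[ℝ] ℝ) :=
      fun i => (LinearMap.proj i).comp (rmat B).mulVecLin with hφdef
    have hφ : ∀ i v, φ i v = (rmat B).mulVec v i := fun i v => rfl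
    set W1 : Submodule ℝ (Fin n → ℝ) :=
      LinearMap.ker (rmat A).mulVecLin ⊓
        ⨅ i ∈ {i : Fin mB | ∀ p ∈ P, (rmat B).mulVec p i = (d i : ℝ)}, LinearMap.ker (φ i)
      with hW1def
    set W2 : Submodule ℝ (Fin n → ℝ) := W1 ⊓ LinearMap.ker (φ j) with hW2def
    have hW1mem : ∀ v : Fin n → ℝ, v ∈ W1 ↔ ((rmat A).mulVec v = 0 ∧
        ∀ i : Fin mB, (∀ p ∈ P, (rmat B).mulVec p i = (d i : ℝ)) → (rmat B).mulVec v i = 0) := by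
      intro v
      rw [hW1def]
      rw [Submodule.mem_inf]
      simp only [Submodule.mem_iInf, LinearMap.mem_ker, Set.mem_setOf_eq,
        Matrix.mulVecLin_apply, hφ]
    -- vectorSpan P ≤ W1
    have claim1 : vectorSpan ℝ P ≤ W1 := by
      rw [vectorSpan_def]
      refine Submodule.span_le.2 ?_
      rintro v ⟨p, hp, q', hq', rfl⟩
      refine (hW1mem _).2 ⟨?_, ?_⟩
      · show (rmat A).mulVec (p - q') = 0
        rw [Matrix.mulVec_sub, hp.1, hq'.1, sub_self]
      · intro i hi
        show (rmat B).mulVec (p - q') i = 0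
        rw [mulVec_sub_apply, hi p hp, hi q' hq', sub_self]
    -- W2 ≤ vectorSpan F
    have claim2 : W2 ≤ vectorSpan ℝ F := by
      intro v hv
      obtain ⟨hv1, hvj⟩ := Submodule.mem_inf.1 hv
      obtain ⟨hvA, hvE⟩ := (hW1mem v).1 hv1
      rw [LinearMap.mem_ker, hφ] at hvj
      obtain ⟨ε, hε, hstep⟩ := eps_step K (fun i => (rmat B).mulVec v i)
          (fun i => (d i : ℝ) - (rmat B).mulVec u i)
          (fun i hi => by
            by_cases hij : i = j
            · subst hij; exact Or.inl hvj.le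
            · by_cases hni : ∀ p ∈ P, (rmat B).mulVec p i = (d i : ℝ)
              · exact Or.inl (hvE i hni).le
              · exact Or.inr (by linarith [hustrict i hi hij hni]))
          (fun i hi => by linarith [huP.2 i])
      have hu' : u + ε • v ∈ P := by
        refine hK _ ?_ fun i hi => ?_
        · rw [Matrix.mulVec_add, Matrix.mulVec_smul, huA, hvA]; simp
        · rw [mulVec_comb]; linarith [hstep i hi]
      have hu'F : u + ε • v ∈ F := ⟨hu', by rw [mulVec_comb, huj, hvj]; ring⟩
      have huF : u ∈ F := ⟨huP, huj⟩
      have hdir : (u + ε • v) -ᵥ u ∈ (affineSpan ℝ F).direction :=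
        AffineSubspace.vsub_mem_direction (subset_affineSpan ℝ F hu'F) (subset_affineSpan ℝ F huF)
      rw [direction_affineSpan] at hdir
      have hvv : v = ε⁻¹ • ((u + ε • v) -ᵥ u) := by
        have : (u + ε • v) -ᵥ u = ε • v := by
          show u + ε • v - u = ε • v; abel
        rw [this, smul_smul, inv_mul_cancel₀ hε.ne', one_smul]
      rw [hvv]
      exact Submodule.smul_mem _ _ hdir
    -- finrank bookkeeping
    have hW1W2 : Module.finrank ℝ W1 ≤ Module.finrank ℝ W2 + 1 := by
      rw [hW2def]
      exact finrank_le_inf_ker_add_one W1 (φ j)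
    have hFP : F ⊆ P := fun p hp => hp.1
    -- dim F < dim P
    have hdim1 : dimS F + 1 ≤ dimS P := by
      have hle : vectorSpan ℝ F ≤ vectorSpan ℝ P := vectorSpan_mono ℝ hFP
      have hne : vectorSpan ℝ F ≠ vectorSpan ℝ P := by
        intro h
        have hspan : affineSpan ℝ F = affineSpan ℝ P :=
          AffineSubspace.ext_of_direction_eq
            (by rw [direction_affineSpan, direction_affineSpan, h])
            ⟨y, subset_affineSpan ℝ F hyF, subset_affineSpan ℝ P hyP⟩
        have hsub : affineSpan ℝ F ≤ hypAS B d j :=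
          affineSpan_le.2 (fun p hp => hp.2)
        have hc' : c ∈ affineSpan ℝ P := subset_affineSpan ℝ P hcP
        rw [← hspan] at hc'
        exact hcj.ne (hsub hc')
      have := Submodule.finrank_lt_finrank_of_lt (lt_of_le_of_ne hle hne)
      unfold dimS
      rw [direction_affineSpan, direction_affineSpan]
      omega
    have hdim2 : dimS P ≤ dimS F + 1 := by
      have h1 : Module.finrank ℝ (vectorSpan ℝ P) ≤ Module.finrank ℝ W1 :=
        Submodule.finrank_mono claim1
      have h2 : Module.finrank ℝ W2 ≤ Module.finrank ℝ (vectorSpan ℝ F) :=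
        Submodule.finrank_mono claim2
      unfold dimS
      rw [direction_affineSpan, direction_affineSpan]
      omega
    exact ⟨F, ⟨hFace, by omega⟩, hyF, hxF⟩
  · -- contradiction: every tight-at-y constraint in K is tight at x
    exfalso
    push_neg at hcase
    obtain ⟨ε, hε, hstep⟩ := eps_step K
      (fun i => (rmat B).mulVec y i - (rmat B).mulVec x i)
      (fun i => (d i : ℝ) - (rmat B).mulVec y i)
      (fun i hi => by
        by_cases hti : (rmat B).mulVec y i = (d i : ℝ)
        · have hxi := hcase i hi hti
          have hxi' := hxP.2 i
          left; linarith
        · right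
          rcases (hyP.2 i).lt_or_eq with h | h
          · linarith
          · exact absurd h hti)
      (fun i hi => by linarith [hyP.2 i])
    have hy' : y + ε • (y - x) ∈ P := by
      refine hK _ ?_ fun i hi => ?_
      · rw [Matrix.mulVec_add, Matrix.mulVec_smul, Matrix.mulVec_sub, hyP.1, hxP.1]; simp
      · rw [mulVec_comb, mulVec_sub_apply]
        linarith [hstep i hi]
    have hb := hy'.2 i0
    rw [mulVec_comb, mulVec_sub_apply, hty] at hb
    nlinarith

lemma Pset_closed (A : Matrix (Fin mA) (Fin n) ℤ) (B : Matrix (Fin mB) (Fin n) ℤ)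
    (b : Fin mA → ℤ) (d : Fin mB → ℤ) : IsClosed (Pset A B b d) := by
  have h1 : Pset A B b d = {p | (rmat A).mulVec p = rvec b} ∩
      ⋂ i, {p | (rmat B).mulVec p i ≤ (d i : ℝ)} := by
    ext p; simp [Pset, Set.mem_iInter]
  rw [h1]
  have hA : Continuous fun p : Fin n → ℝ => (rmat A).mulVec p := by
    have h := LinearMap.continuous_of_finiteDimensional (rmat A).mulVecLin
    exact h
  have hB : Continuous fun p : Fin n → ℝ => (rmat B).mulVec p := by
    have h := LinearMap.continuous_of_finiteDimensional (rmat B).mulVecLin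
    exact h
  refine IsClosed.inter (isClosed_eq hA continuous_const) (isClosed_iInter fun i => ?_)
  exact isClosed_le ((continuous_apply i).comp hB) continuous_const

lemma Pset_convex (A : Matrix (Fin mA) (Fin n) ℤ) (B : Matrix (Fin mB) (Fin n) ℤ)
    (b : Fin mA → ℤ) (d : Fin mB → ℤ) : Convex ℝ (Pset A B b d) := by
  intro p hp q hq a c ha hc hac
  constructor
  · rw [Matrix.mulVec_add, Matrix.mulVec_smul, Matrix.mulVec_smul, hp.1, hq.1,
      ← add_smul, hac, one_smul]
  · intro i
    rw [Matrix.mulVec_add]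
    simp only [Pi.add_apply, Matrix.mulVec_smul, Pi.smul_apply, smul_eq_mul]
    have h3 : a * (d i : ℝ) + c * (d i : ℝ) = (d i : ℝ) := by
      linear_combination ((d i : ℝ)) * hac
    linarith [mul_le_mul_of_nonneg_left (hp.2 i) ha, mul_le_mul_of_nonneg_left (hq.2 i) hc]

lemma norm1_nonneg (v : Fin n → ℝ) : 0 ≤ norm1 v :=
  Finset.sum_nonneg fun i _ => abs_nonneg _

lemma norm1_shift (x z : Fin n → ℝ) (α : ℝ) :
    norm1 (x - (x + α • z)) = |α| * norm1 z := by
  unfold norm1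
  rw [Finset.mul_sum]
  refine Finset.sum_congr rfl fun i _ => ?_
  have h1 : (x - (x + α • z)) i = -(α * z i) := by
    simp [Pi.sub_apply, Pi.add_apply, Pi.smul_apply, smul_eq_mul]
  rw [h1, abs_neg, abs_mul]

lemma convexOn_norm1_sub (x : Fin n → ℝ) :
    ConvexOn ℝ Set.univ (fun p : Fin n → ℝ => norm1 (x - p)) := by
  refine ⟨convex_univ, ?_⟩
  intro p _ q _ a c ha hc hac
  unfold norm1
  simp only [smul_eq_mul]
  rw [Finset.mul_sum, Finset.mul_sum, ← Finset.sum_add_distrib]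
  refine Finset.sum_le_sum fun i _ => ?_
  have h1 : (x - (a • p + c • q)) i = a * (x i - p i) + c * (x i - q i) := by
    simp only [Pi.sub_apply, Pi.add_apply, Pi.smul_apply, smul_eq_mul]
    linear_combination (-(x i)) * hac
  rw [h1]
  calc |a * (x i - p i) + c * (x i - q i)|
      ≤ |a * (x i - p i)| + |c * (x i - q i)| := abs_add_le _ _
    _ = a * |x i - p i| + c * |x i - q i| := by
        rw [abs_mul, abs_mul, abs_of_nonneg ha, abs_of_nonneg hc]
  -- check shapes
  
lemma continuous_norm1_sub (x : Fin n → ℝ) :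
    Continuous (fun p : Fin n → ℝ => norm1 (x - p)) := by
  show Continuous (fun p : Fin n → ℝ => ∑ i, |x i - p i|)
  exact continuous_finset_sum _ fun i _ => (continuous_const.sub (continuous_apply i)).abs

/-- for a bounded polyhedron `P`, a maximal step from a vertex along a
1-norm-unit direction has length at least `ω₁`, while any feasible step from the vertex
along a 1-norm-unit direction has length at most `M₁`. -/
theorem maximal_step_bounds
    (A : Matrix (Fin mA) (Fin n) ℤ) (B : Matrix (Fin mB) (Fin n) ℤ)
    (b : Fin mA → ℤ) (d : Fin mB → ℤ)
    (hmB : 1 ≤ mB)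
    (hA : (rmat A).rank = mA)
    (hAB : (rmat (Matrix.fromRows A B)).rank = n)
    (hbdd : Bornology.IsBounded (Pset A B b d))
    (x : Fin n → ℝ) (hx : x ∈ Set.extremePoints ℝ (Pset A B b d)) :
    (∀ (z : Fin n → ℝ) (α : ℝ), norm1 z = 1 →
      (∃ ε : ℝ, 0 < ε ∧ x + ε • z ∈ Pset A B b d) →
      0 < α → x + α • z ∈ Pset A B b d →
      (∀ ε : ℝ, 0 < ε → x + (α + ε) • z ∉ Pset A B b d) →
      omega1 (Pset A B b d) ≤ α) ∧
    (∀ (zs : Fin n → ℝ) (αs : ℝ), norm1 zs = 1 →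
      0 < αs → x + αs • zs ∈ Pset A B b d →
      αs ≤ M1 (Pset A B b d)) := by
  classical
  have hxP : x ∈ Pset A B b d := hx.1
  constructor
  · -- part (a)
    intro z α hz hfeas hα hyP hmax
    -- A z = 0
    have hAz : (rmat A).mulVec z = 0 := by
      have h1 := hyP.1
      rw [Matrix.mulVec_add, Matrix.mulVec_smul, hxP.1] at h1
      have h2 : α • (rmat A).mulVec z = 0 := by
        have := congrArg (fun v => v - rvec b) h1
        simpa [add_sub_cancel_left] using this
      rcases smul_eq_zero.1 h2 with h | h
      · exact absurd h hα.ne'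
      · exact h
    -- a constraint tight at y := x + α • z with positive direction
    have hBy : ∀ i, (rmat B).mulVec (x + α • z) i
        = (rmat B).mulVec x i + α * (rmat B).mulVec z i := fun i => mulVec_comb _ _ _ _ _
    have hi0 : ∃ i0, (rmat B).mulVec (x + α • z) i0 = (d i0 : ℝ)
        ∧ 0 < (rmat B).mulVec z i0 := by
      by_contra hno
      push_neg at hno
      obtain ⟨ε, hε, hstep⟩ := eps_step Finset.univ (fun i => (rmat B).mulVec z i)
        (fun i => (d i : ℝ) - (rmat B).mulVec (x + α • z) i)
        (fun i _ => by
          by_cases h0 : 0 < (rmat B).mulVec z i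
          · rcases (hyP.2 i).lt_or_eq with h | h
            · right; linarith
            · exact absurd h0 (not_lt.2 (hno i h))
          · left; exact not_lt.1 h0)
        (fun i _ => by linarith [hyP.2 i])
      refine hmax ε hε ⟨?_, fun i => ?_⟩
      · rw [Matrix.mulVec_add, Matrix.mulVec_smul, hxP.1, hAz]
        simp
      · have h1 := hstep i (Finset.mem_univ i)
        have h2 : (rmat B).mulVec (x + (α + ε) • z) i
            = (rmat B).mulVec x i + (α + ε) * (rmat B).mulVec z i := mulVec_comb _ _ _ _ _
        rw [h2]
        have h3 := hBy i
        linarith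
    obtain ⟨i0, hty, hzi0⟩ := hi0
    have hsx : (rmat B).mulVec x i0 < (d i0 : ℝ) := by
      have := hBy i0
      nlinarith
    obtain ⟨F, hFacet, hyF, hxF⟩ := facet_exists A B b d x (x + α • z) hxP hyP i0 hty hsx
    have hmem : α ∈ {r : ℝ | ∃ v ∈ Set.extremePoints ℝ (Pset A B b d),
        ∃ F : Set (Fin n → ℝ), IsFacet (Pset A B b d) F ∧ v ∉ F ∧
          ∃ f ∈ F, r = norm1 (v - f)} := by
      refine ⟨x, hx, F, hFacet, hxF, x + α • z, hyF, ?_⟩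
      rw [norm1_shift, abs_of_pos hα, hz, mul_one]
    refine csInf_le ⟨0, ?_⟩ hmem
    rintro r ⟨v, -, F', -, -, f, -, rfl⟩
    exact norm1_nonneg _
  · -- part (b)
    intro zs αs hzs hαs hyP
    have hPc : IsCompact (Pset A B b d) :=
      Metric.isCompact_of_isClosed_isBounded (Pset_closed A B b d) hbdd
    have hKM := closure_convexHull_extremePoints hPc (Pset_convex A B b d)
    obtain ⟨R, hR⟩ := hbdd.subset_closedBall 0
    have hub : ∀ e ∈ Set.extremePoints ℝ (Pset A B b d),
        norm1 (x - e) ≤ M1 (Pset A B b d) := by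
      intro e he
      refine le_csSup ⟨(n : ℝ) * (2 * R), ?_⟩ ⟨x, hx, e, he, rfl⟩
      rintro r ⟨v₁, hv₁, v₂, hv₂, rfl⟩
      have hb1 : ‖v₁‖ ≤ R := by
        have := hR (extremePoints_subset hv₁)
        simpa [Metric.mem_closedBall, dist_zero_right] using this
      have hb2 : ‖v₂‖ ≤ R := by
        have := hR (extremePoints_subset hv₂)
        simpa [Metric.mem_closedBall, dist_zero_right] using this
      have hsum : norm1 (v₁ - v₂) ≤ ∑ _i : Fin n, 2 * R := by
        refine Finset.sum_le_sum fun i _ => ?_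
        have h1 : |v₁ i| ≤ ‖v₁‖ := by
          simpa [Real.norm_eq_abs] using norm_le_pi_norm v₁ i
        have h2 : |v₂ i| ≤ ‖v₂‖ := by
          simpa [Real.norm_eq_abs] using norm_le_pi_norm v₂ i
        have h3 : |(v₁ - v₂) i| ≤ |v₁ i| + |v₂ i| := by
          simpa [Pi.sub_apply] using abs_sub (v₁ i) (v₂ i)
        linarith
      simpa [Finset.sum_const, Finset.card_univ, nsmul_eq_mul, mul_assoc] using hsum
    have hsubl : Pset A B b d ⊆ {p | norm1 (x - p) ≤ M1 (Pset A B b d)} := by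
      have hconv : Convex ℝ {p : Fin n → ℝ | norm1 (x - p) ≤ M1 (Pset A B b d)} := by
        have h := (convexOn_norm1_sub x).convex_le (M1 (Pset A B b d))
        have h2 : {p : Fin n → ℝ | norm1 (x - p) ≤ M1 (Pset A B b d)}
            = {p : Fin n → ℝ | p ∈ Set.univ ∧ norm1 (x - p) ≤ M1 (Pset A B b d)} := by
          ext p; simp
        rw [h2]; exact h
      have hclosed : IsClosed {p : Fin n → ℝ | norm1 (x - p) ≤ M1 (Pset A B b d)} :=
        isClosed_le (continuous_norm1_sub x) continuous_const
      have hcc : closure ((convexHull ℝ) (Set.extremePoints ℝ (Pset A B b d)))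
          ⊆ {p : Fin n → ℝ | norm1 (x - p) ≤ M1 (Pset A B b d)} :=
        closure_minimal (convexHull_min hub hconv) hclosed
      rw [hKM] at hcc
      exact hcc
    have := hsubl hyP
    rw [Set.mem_setOf_eq, norm1_shift, abs_of_pos hαs, hzs, mul_one] at this
    exact this
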